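/- For every real μ > 0 and every real x ≥ 0, the pointwise inequality e^{−x} − e^{−μ} + (x − μ)e^{−μ} ≤ ((1 − e^{−μ} − μe^{−μ})/μ²)·(x − μ)² holds. -/

import Mathlib

open Nat

lemma exp_tsum' (x : ℝ) : Real.exp x = ∑' n : ℕ, x ^ n / n ! := by
  rw [Real.exp_eq_exp_ℝ, NormedSpace.exp_eq_tsum_div]

lemma summable_shift (x : ℝ) : Summable (fun n : ℕ => x ^ (n + 2) / (n + 2)!) := by
  simpa [Function.comp_def] using (Real.summable_pow_div_factorial x).comp_injective (add_left_injective 2)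

lemma exp_sub_one_sub (x : ℝ) :
    Real.exp x - 1 - x = ∑' n : ℕ, x ^ (n + 2) / (n + 2)! := by
  have hs := Real.summable_pow_div_factorial x
  have h1 : Summable (fun n : ℕ => x ^ (n + 1) / (n + 1)!) := by
    simpa [Function.comp_def] using hs.comp_injective (add_left_injective 1)
  rw [exp_tsum', Summable.tsum_eq_zero_add hs, Summable.tsum_eq_zero_add h1]
  simp [Nat.factorial]

lemma L3 {s μ : ℝ} (hs : 0 ≤ s) (hsμ : s ≤ μ) :
    μ ^ 2 * (Real.exp s - 1 - s) ≤ s ^ 2 * (Real.exp μ - 1 - μ) := by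
  rw [exp_sub_one_sub, exp_sub_one_sub, ← tsum_mul_left, ← tsum_mul_left]
  apply Summable.tsum_le_tsum _ ((summable_shift s).mul_left _) ((summable_shift μ).mul_left _)
  intro n
  have hμ0 : 0 ≤ μ := hs.trans hsμ
  have key : μ ^ 2 * s ^ (n + 2) ≤ s ^ 2 * μ ^ (n + 2) := by
    have h1 : s ^ n ≤ μ ^ n := pow_le_pow_left₀ hs hsμ n
    have h2 : (0:ℝ) ≤ s ^ 2 * μ ^ 2 := by positivity
    calc μ ^ 2 * s ^ (n + 2) = (s ^ 2 * μ ^ 2) * s ^ n := by ring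
      _ ≤ (s ^ 2 * μ ^ 2) * μ ^ n := by nlinarith
      _ = s ^ 2 * μ ^ (n + 2) := by ring
  have hf : (0:ℝ) < (n + 2)! := by positivity
  rw [mul_div_assoc', mul_div_assoc']
  exact div_le_div_of_nonneg_right key hf.le

lemma L2 {t : ℝ} (ht : 0 ≤ t) : 1 + t + t ^ 2 / 2 ≤ Real.exp t := by
  have h := Real.sum_le_exp_of_nonneg ht 3
  simp [Finset.sum_range_succ, Nat.factorial] at h
  nlinarith [h]

lemma L1 {t : ℝ} (ht : 0 ≤ t) : Real.exp (-t) ≤ 1 - t + t ^ 2 / 2 := by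
  have h2 := L2 ht
  have he : Real.exp (-t) * Real.exp t = 1 := by
    rw [← Real.exp_add]; simp
  have hp : (0:ℝ) < Real.exp t := Real.exp_pos t
  have hq : (0:ℝ) < 1 - t + t ^ 2 / 2 := by nlinarith
  nlinarith [mul_pos hq hp, Real.exp_pos (-t)]

lemma keylemma (μ u : ℝ) (hμ : 0 < μ) (hu : -μ ≤ u) :
    μ ^ 2 * (Real.exp (-u) - 1 + u) ≤ u ^ 2 * (Real.exp μ - 1 - μ) := by
  rcases le_or_gt 0 u with h | h
  · have h1 := L1 h
    have h2 := L2 hμ.le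
    nlinarith [mul_le_mul_of_nonneg_left h1 (sq_nonneg μ), mul_le_mul_of_nonneg_left h2 (sq_nonneg u), sq_nonneg u, sq_nonneg μ]
  · have hs0 : 0 ≤ -u := by linarith
    have hsμ : -u ≤ μ := by linarith
    have h3 := L3 hs0 hsμ
    calc μ ^ 2 * (Real.exp (-u) - 1 + u)
        = μ ^ 2 * (Real.exp (-u) - 1 - (-u)) := by ring
      _ ≤ (-u) ^ 2 * (Real.exp μ - 1 - μ) := by simpa using h3
      _ = u ^ 2 * (Real.exp μ - 1 - μ) := by ring

/-- pointwise convexity-defect bound. -/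
theorem stmt_4 (μ : ℝ) (hμ : 0 < μ) (x : ℝ) (hx : 0 ≤ x) :
    Real.exp (-x) - Real.exp (-μ) + (x - μ) * Real.exp (-μ) ≤
      ((1 - Real.exp (-μ) - μ * Real.exp (-μ)) / μ^2) * (x - μ)^2 := by
  have key := keylemma μ (x - μ) hμ (by linarith)
  have hexp : Real.exp (-x) = Real.exp (-μ) * Real.exp (-(x - μ)) := by
    rw [← Real.exp_add]; ring_nf
  have hEm : (0:ℝ) < Real.exp (-μ) := Real.exp_pos _
  have heq : Real.exp (-μ) * Real.exp μ = 1 := by rw [← Real.exp_add]; simp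
  have hμ2 : (0:ℝ) < μ ^ 2 := by positivity
  rw [hexp, div_mul_eq_mul_div, le_div_iff₀ hμ2]
  nlinarith [mul_le_mul_of_nonneg_left key hEm.le, heq, sq_nonneg (x - μ)]
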